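/- Let V : ℝ² → ℝ satisfy V ≥ V₀ > 0 and 𝒱(x) := V(x) - (1/2)⟨∇V(x),x⟩ nondecreasing along rays (condition (V₂)), b ≥ 0, p ≥ 3, and let u ∈ E with J(u) = 0 and u ≠ 0, where J(u) = ∫(2|∇u|² + 𝒱(x)u² - (2b(p-1)/p)|u|^p) dx - (1/(8π))(∫u²)² + (1/(2π))∫∫log|x-y| u(x)²u(y)² dxdy. Then I(u) = (1/4)∫[V(x) + (1/2)⟨∇V(x),x⟩]u² dx + (1/(32π))(∫u²)² + (b(p-3)/(2p))∫|u|^p dx, where I(u) = (1/2)∫(|∇u|²+V u²) + (1/(8π))∫∫log|x-y|u²u² - (b/p)∫|u|^p. In particular I(u) ≥ (1/(32π))(∫u² dx)² > 0. -/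

import Mathlib

open MeasureTheory
open scoped RealInnerProductSpace

lemma grad_inner_eq {E : Type*} [NormedAddCommGroup E] [InnerProductSpace ℝ E]
    [CompleteSpace E] (f : E → ℝ) (y v : E) :
    ⟪gradient f y, v⟫ = fderiv ℝ f y v := by
  rw [gradient]
  exact InnerProductSpace.toDual_symm_apply

lemma grad_ray_nonneg {E : Type*} [NormedAddCommGroup E] [InnerProductSpace ℝ E]
    [CompleteSpace E] (V : E → ℝ) (V₀ : ℝ) (hV : ContDiff ℝ 1 V) (hV₀ : 0 < V₀)
    (hVlb : ∀ x, V₀ ≤ V x)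
    (hmono : ∀ x : E,
      MonotoneOn (fun t : ℝ => V (t • x) - (1 / 2) * ⟪gradient V (t • x), t • x⟫)
        (Set.Ioi (0 : ℝ)))
    (x : E) : 0 ≤ ⟪gradient V x, x⟫ := by
  by_contra hcon
  push_neg at hcon
  set c : ℝ := ⟪gradient V x, x⟫ with hc
  set f : ℝ → ℝ := fun t => V (t • x) with hfdef
  have hVd : Differentiable ℝ V := hV.differentiable one_ne_zero
  have hf : ∀ t : ℝ, HasDerivAt f (⟪gradient V (t • x), x⟫) t := by
    intro t
    have h1 : HasDerivAt (fun s : ℝ => s • x) x t := by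
      simpa using (hasDerivAt_id t).smul_const x
    have h2 := (hVd (t • x)).hasFDerivAt.comp_hasDerivAt t h1
    rw [grad_inner_eq]
    exact h2
  set K : ℝ := f 1 - c / 2 with hK
  -- monotonicity fact: for t ≥ 1, t * f'(t) ≤ 2 * (f t - K)
  have hmonokey : ∀ t : ℝ, 1 ≤ t → t * ⟪gradient V (t • x), x⟫ ≤ 2 * (f t - K) := by
    intro t ht
    have h1 : (fun s : ℝ => V (s • x) - (1 / 2) * ⟪gradient V (s • x), s • x⟫) 1
        ≤ (fun s : ℝ => V (s • x) - (1 / 2) * ⟪gradient V (s • x), s • x⟫) t :=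
      hmono x (Set.mem_Ioi.2 one_pos) (Set.mem_Ioi.2 (lt_of_lt_of_le one_pos ht)) ht
    simp only [one_smul] at h1
    have h2 : ⟪gradient V (t • x), t • x⟫ = t * ⟪gradient V (t • x), x⟫ :=
      real_inner_smul_right _ _ _
    rw [h2] at h1
    simp only [hfdef, hK, hc, one_smul]
    linarith
  set g : ℝ → ℝ := fun t => (f t - K) / t ^ 2 with hg
  have hganti : AntitoneOn g (Set.Ici (1 : ℝ)) := by
    apply antitoneOn_of_deriv_nonpos (convex_Ici 1)
    · apply ContinuousOn.div
      · exact ((hV.continuous.comp (continuous_id.smul continuous_const)).sub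
          continuous_const).continuousOn
      · exact (continuous_pow 2).continuousOn
      · intro t ht
        have : (1 : ℝ) ≤ t := ht
        positivity
    · rw [interior_Ici]
      intro t ht
      have ht1 : (1 : ℝ) < t := ht
      have hd : HasDerivAt g ((⟪gradient V (t • x), x⟫ * t ^ 2 -
          (f t - K) * (2 * t ^ 1)) / (t ^ 2) ^ 2) t := by
        have h1 : HasDerivAt (fun s => f s - K) (⟪gradient V (t • x), x⟫) t :=
          (hf t).sub_const K
        have h2 : HasDerivAt (fun s : ℝ => s ^ 2) ((2 : ℕ) * t ^ 1) t := hasDerivAt_pow 2 t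
        have := h1.div h2 (by positivity)
        simpa [Pi.div_def] using this
      exact hd.differentiableAt.differentiableWithinAt
    · rw [interior_Ici]
      intro t ht
      have ht1 : (1 : ℝ) < t := ht
      have ht0 : (0 : ℝ) < t := lt_trans one_pos ht1
      have hd : HasDerivAt g ((⟪gradient V (t • x), x⟫ * t ^ 2 -
          (f t - K) * (2 * t ^ 1)) / (t ^ 2) ^ 2) t := by
        have h1 : HasDerivAt (fun s => f s - K) (⟪gradient V (t • x), x⟫) t :=
          (hf t).sub_const K
        have h2 : HasDerivAt (fun s : ℝ => s ^ 2) ((2 : ℕ) * t ^ 1) t := hasDerivAt_pow 2 t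
        have := h1.div h2 (by positivity)
        simpa [Pi.div_def] using this
      rw [hd.deriv]
      have hnum : ⟪gradient V (t • x), x⟫ * t ^ 2 - (f t - K) * (2 * t ^ 1) ≤ 0 := by
        have h3 := hmonokey t ht1.le
        have : ⟪gradient V (t • x), x⟫ * t ^ 2 = t * (t * ⟪gradient V (t • x), x⟫) := by ring
        nlinarith
      apply div_nonpos_of_nonpos_of_nonneg hnum
      positivity
  -- hence f t ≤ K + (c/2) * t^2 for t ≥ 1
  have hbound : ∀ t : ℝ, 1 ≤ t → f t ≤ K + (c / 2) * t ^ 2 := by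
    intro t ht
    have h1 := hganti (Set.mem_Ici.2 le_rfl) (Set.mem_Ici.2 ht) ht
    have hg1 : g 1 = c / 2 := by simp [hg, hK]
    have ht0 : (0 : ℝ) < t := lt_of_lt_of_le one_pos ht
    rw [hg1] at h1
    have h2 : (f t - K) ≤ (c / 2) * t ^ 2 := by
      have := (div_le_iff₀ (by positivity : (0:ℝ) < t ^ 2)).1 h1
      linarith
    linarith
  -- contradiction: choose large t
  set M : ℝ := 2 * (K - V₀) / (-c) with hM
  set t : ℝ := max 1 (Real.sqrt M + 1) with htdef
  have ht1 : (1 : ℝ) ≤ t := le_max_left _ _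
  have hMt : M < t ^ 2 := by
    have h1 : Real.sqrt M < t := by
      have := le_max_right 1 (Real.sqrt M + 1)
      linarith
    exact Real.lt_sq_of_sqrt_lt h1
  have h2 := hbound t ht1
  have h3 := hVlb (t • x)
  have h4 : f t = V (t • x) := rfl
  have hcne : c ≠ 0 := ne_of_lt hcon
  clear_value c f K M t
  have hMc : M * (-c) = 2 * (K - V₀) := by
    rw [hM]; field_simp
  have h5 : t ^ 2 * (-c) ≤ M * (-c) := by
    rw [hMc]; rw [h4] at h2; linarith
  have h6 : t ^ 2 ≤ M := le_of_mul_le_mul_right (by linarith) (neg_pos.2 hcon)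
  linarith

theorem stmt_18 (V u : EuclideanSpace ℝ (Fin 2) → ℝ) (V₀ b p : ℝ)
    (hV : ContDiff ℝ 1 V) (hV₀ : 0 < V₀) (hVlb : ∀ x, V₀ ≤ V x)
    (hmono : ∀ x : EuclideanSpace ℝ (Fin 2),
      MonotoneOn (fun t : ℝ => V (t • x) - (1 / 2) * ⟪gradient V (t • x), t • x⟫)
        (Set.Ioi (0 : ℝ)))
    (hb : 0 ≤ b) (hp : 3 ≤ p)
    (hu : Differentiable ℝ u)
    (hu0 : ¬ u =ᵐ[volume] (0 : EuclideanSpace ℝ (Fin 2) → ℝ))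
    (hgrad2 : Integrable (fun x => ‖gradient u x‖ ^ 2))
    (hu2 : Integrable (fun x => (u x) ^ 2))
    (hVu2 : Integrable (fun x => V x * (u x) ^ 2))
    (hdVu2 : Integrable (fun x => ⟪gradient V x, x⟫ * (u x) ^ 2))
    (hup : Integrable (fun x => |u x| ^ p))
    (hlog : Integrable (fun z : EuclideanSpace ℝ (Fin 2) × EuclideanSpace ℝ (Fin 2) =>
      Real.log ‖z.1 - z.2‖ * (u z.1) ^ 2 * (u z.2) ^ 2))
    (hJ : (∫ x, (2 * ‖gradient u x‖ ^ 2
            + (V x - (1 / 2) * ⟪gradient V x, x⟫) * (u x) ^ 2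
            - (2 * b * (p - 1) / p) * |u x| ^ p))
          - (1 / (8 * Real.pi)) * (∫ x, (u x) ^ 2) ^ 2
          + (1 / (2 * Real.pi)) * (∫ x, ∫ y, Real.log ‖x - y‖ * (u x) ^ 2 * (u y) ^ 2)
          = 0) :
    ((1 / 2) * (∫ x, (‖gradient u x‖ ^ 2 + V x * (u x) ^ 2))
        + (1 / (8 * Real.pi)) * (∫ x, ∫ y, Real.log ‖x - y‖ * (u x) ^ 2 * (u y) ^ 2)
        - (b / p) * ∫ x, |u x| ^ p)
      = (1 / 4) * (∫ x, (V x + (1 / 2) * ⟪gradient V x, x⟫) * (u x) ^ 2)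
        + (1 / (32 * Real.pi)) * (∫ x, (u x) ^ 2) ^ 2
        + (b * (p - 3) / (2 * p)) * ∫ x, |u x| ^ p ∧
    (1 / (32 * Real.pi)) * (∫ x, (u x) ^ 2) ^ 2
      ≤ (1 / 2) * (∫ x, (‖gradient u x‖ ^ 2 + V x * (u x) ^ 2))
        + (1 / (8 * Real.pi)) * (∫ x, ∫ y, Real.log ‖x - y‖ * (u x) ^ 2 * (u y) ^ 2)
        - (b / p) * ∫ x, |u x| ^ p ∧
    0 < (1 / 2) * (∫ x, (‖gradient u x‖ ^ 2 + V x * (u x) ^ 2))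
        + (1 / (8 * Real.pi)) * (∫ x, ∫ y, Real.log ‖x - y‖ * (u x) ^ 2 * (u y) ^ 2)
        - (b / p) * ∫ x, |u x| ^ p := by
  have hp0 : (0 : ℝ) < p := by linarith
  have hπ : (0 : ℝ) < Real.pi := Real.pi_pos
  -- integrability pieces
  have i1 : Integrable (fun x => 2 * ‖gradient u x‖ ^ 2) := hgrad2.const_mul 2
  have i2 : Integrable (fun x => (1 / 2) * (⟪gradient V x, x⟫ * (u x) ^ 2)) :=
    hdVu2.const_mul _
  have i3 : Integrable (fun x => V x * (u x) ^ 2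
      - (1 / 2) * (⟪gradient V x, x⟫ * (u x) ^ 2)) := hVu2.sub i2
  have i4 : Integrable (fun x => 2 * ‖gradient u x‖ ^ 2
      + (V x * (u x) ^ 2 - (1 / 2) * (⟪gradient V x, x⟫ * (u x) ^ 2))) := i1.add i3
  have i5 : Integrable (fun x => (2 * b * (p - 1) / p) * |u x| ^ p) := hup.const_mul _
  -- split the J integral
  have h1 : (∫ x, (2 * ‖gradient u x‖ ^ 2
        + (V x - (1 / 2) * ⟪gradient V x, x⟫) * (u x) ^ 2
        - (2 * b * (p - 1) / p) * |u x| ^ p))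
      = 2 * (∫ x, ‖gradient u x‖ ^ 2)
        + ((∫ x, V x * (u x) ^ 2) - (1 / 2) * (∫ x, ⟪gradient V x, x⟫ * (u x) ^ 2))
        - (2 * b * (p - 1) / p) * (∫ x, |u x| ^ p) := by
    calc (∫ x, (2 * ‖gradient u x‖ ^ 2
        + (V x - (1 / 2) * ⟪gradient V x, x⟫) * (u x) ^ 2
        - (2 * b * (p - 1) / p) * |u x| ^ p))
        = ∫ x, ((2 * ‖gradient u x‖ ^ 2
            + (V x * (u x) ^ 2 - (1 / 2) * (⟪gradient V x, x⟫ * (u x) ^ 2)))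
            - (2 * b * (p - 1) / p) * |u x| ^ p) := by
          congr 1; funext x; ring
      _ = _ := by
          rw [integral_sub i4 i5, integral_add i1 i3, integral_sub hVu2 i2,
            integral_const_mul, integral_const_mul, integral_const_mul]
  have h2 : (∫ x, (‖gradient u x‖ ^ 2 + V x * (u x) ^ 2))
      = (∫ x, ‖gradient u x‖ ^ 2) + (∫ x, V x * (u x) ^ 2) :=
    integral_add hgrad2 hVu2
  have h3 : (∫ x, (V x + (1 / 2) * ⟪gradient V x, x⟫) * (u x) ^ 2)
      = (∫ x, V x * (u x) ^ 2) + (1 / 2) * (∫ x, ⟪gradient V x, x⟫ * (u x) ^ 2) := by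
    calc (∫ x, (V x + (1 / 2) * ⟪gradient V x, x⟫) * (u x) ^ 2)
        = ∫ x, (V x * (u x) ^ 2 + (1 / 2) * (⟪gradient V x, x⟫ * (u x) ^ 2)) := by
          congr 1; funext x; ring
      _ = _ := by rw [integral_add hVu2 i2, integral_const_mul]
  rw [h1] at hJ
  -- main identity
  have heq : ((1 / 2) * (∫ x, (‖gradient u x‖ ^ 2 + V x * (u x) ^ 2))
        + (1 / (8 * Real.pi)) * (∫ x, ∫ y, Real.log ‖x - y‖ * (u x) ^ 2 * (u y) ^ 2)
        - (b / p) * ∫ x, |u x| ^ p)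
      = (1 / 4) * (∫ x, (V x + (1 / 2) * ⟪gradient V x, x⟫) * (u x) ^ 2)
        + (1 / (32 * Real.pi)) * (∫ x, (u x) ^ 2) ^ 2
        + (b * (p - 3) / (2 * p)) * ∫ x, |u x| ^ p := by
    rw [h2, h3]
    linear_combination (1/4) * hJ
  refine ⟨heq, ?_, ?_⟩
  · -- inequality
    rw [heq]
    have hP : 0 ≤ ∫ x, |u x| ^ p :=
      integral_nonneg fun x => Real.rpow_nonneg (abs_nonneg _) p
    have hB : 0 ≤ ∫ x, (V x + (1 / 2) * ⟪gradient V x, x⟫) * (u x) ^ 2 := by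
      apply integral_nonneg
      intro x
      have hw := grad_ray_nonneg V V₀ hV hV₀ hVlb hmono x
      have hVx := le_trans hV₀.le (hVlb x)
      positivity
    have hcoef : 0 ≤ b * (p - 3) / (2 * p) := by
      apply div_nonneg (mul_nonneg hb (by linarith)) (by linarith)
    nlinarith [mul_nonneg hcoef hP]
  · -- positivity
    rw [heq]
    have hP : 0 ≤ ∫ x, |u x| ^ p :=
      integral_nonneg fun x => Real.rpow_nonneg (abs_nonneg _) p
    have hB : 0 ≤ ∫ x, (V x + (1 / 2) * ⟪gradient V x, x⟫) * (u x) ^ 2 := by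
      apply integral_nonneg
      intro x
      have hw := grad_ray_nonneg V V₀ hV hV₀ hVlb hmono x
      have hVx := le_trans hV₀.le (hVlb x)
      positivity
    have hcoef : 0 ≤ b * (p - 3) / (2 * p) :=
      div_nonneg (mul_nonneg hb (by linarith)) (by linarith)
    have hS : 0 < ∫ x, (u x) ^ 2 := by
      rcases lt_or_eq_of_le (integral_nonneg (f := fun x => (u x) ^ 2) fun x => sq_nonneg (u x)) with h | h
      · exact h
      · exfalso
        apply hu0
        have h0 : (∫ x, (u x) ^ 2) = 0 := h.symm
        have := (integral_eq_zero_iff_of_nonneg (fun x => sq_nonneg (u x)) hu2).1 h0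
        filter_upwards [this] with x hx
        have : u x ^ 2 = 0 := hx
        simpa [pow_eq_zero_iff] using this
    have hS2 : 0 < (∫ x, (u x) ^ 2) ^ 2 := pow_pos hS 2
    have : 0 < (1 / (32 * Real.pi)) * (∫ x, (u x) ^ 2) ^ 2 := by positivity
    nlinarith [mul_nonneg hcoef hP]
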